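/- Let I be a Hausdorff, locally connected, first-countable topological space, P ⊆ I a closed subset, and Φ : I → I a homeomorphism with Φ(P) = P. Let η : [0,∞) → [0,∞) be a homeomorphism with η(t) < t for every t > 0. Let X := (I × [0,∞)) ∖ (P × {0}) with the subspace topology, let γ : X → X be the homeomorphism γ(x,t) = (Φ(x), η(t)), and let F : X → ℝ be a continuous proper map (preimages of compact sets are compact) satisfying F(γ(z)) = F(z) + 1 for all z ∈ X. Then for every p ∈ P, F(x,t) tends to +∞ as (x,t) tends to (p,0) within X: for every real M there exist a neighborhood U of p in I and ε > 0 such that F(x,t) > M for every (x,t) ∈ X with x ∈ U and t < ε. -/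

import Mathlib

open Set Filter
open scoped NNReal

/-- A homeomorphism of `ℝ≥0` that contracts positive points fixes `0`. -/
lemma aux_eta_zero (η : ℝ≥0 ≃ₜ ℝ≥0) (hη : ∀ t : ℝ≥0, 0 < t → η t < t) : η 0 = 0 := by
  have h1 : Tendsto (fun t : ℝ≥0 => η t) (nhdsWithin 0 (Set.Ioi 0)) (nhds (η 0)) :=
    (η.continuous.tendsto 0).mono_left nhdsWithin_le_nhds
  have h2 : Tendsto (fun t : ℝ≥0 => η t) (nhdsWithin 0 (Set.Ioi 0)) (nhds 0) := by
    apply tendsto_of_tendsto_of_tendsto_of_le_of_le' tendsto_const_nhds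
      (tendsto_id.mono_left nhdsWithin_le_nhds)
    · exact Eventually.of_forall fun t => zero_le'
    · filter_upwards [self_mem_nhdsWithin] with t ht
      exact (hη t ht).le
  exact tendsto_nhds_unique h1 h2

lemma aux_eta_pos (η : ℝ≥0 ≃ₜ ℝ≥0) (hη : ∀ t : ℝ≥0, 0 < t → η t < t)
    {t : ℝ≥0} (ht : 0 < t) : 0 < η t := by
  rcases eq_or_lt_of_le (zero_le' : 0 ≤ η t) with h | h
  · exfalso
    have : t = 0 := η.injective (h.symm.trans (aux_eta_zero η hη).symm)
    exact ht.ne' this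
  · exact h

lemma aux_eta_le (η : ℝ≥0 ≃ₜ ℝ≥0) (hη : ∀ t : ℝ≥0, 0 < t → η t < t)
    (t : ℝ≥0) : η t ≤ t := by
  rcases eq_or_lt_of_le (zero_le' : 0 ≤ t) with h | h
  · rw [← h, aux_eta_zero η hη]
  · exact (hη t h).le

/-- Connectedness of `(V × [0,ε)) ∩ X`. -/
lemma aux_conn {I : Type*} [TopologicalSpace I] (P : Set I)
    (Xs : Set (I × ℝ≥0)) (hXs : Xs = {z : I × ℝ≥0 | ¬(z.1 ∈ P ∧ z.2 = 0)})
    (V : Set I) (hV : IsPreconnected V) (p : I) (hpV : p ∈ V)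
    (ε : ℝ≥0) (hε : 0 < ε) :
    IsPreconnected ((V ×ˢ Set.Iio ε) ∩ Xs) := by
  set t₀ : ℝ≥0 := ε / 2 with ht₀def
  have ht₀pos : 0 < t₀ := by
    rw [ht₀def]; positivity
  have ht₀lt : t₀ < ε := NNReal.half_lt_self hε.ne'
  apply isPreconnected_of_forall (p, t₀)
  rintro ⟨x, t⟩ ⟨⟨hxV, htε⟩, hXsz⟩
  refine ⟨({x} ×ˢ Set.uIcc t t₀) ∪ (V ×ˢ {t₀}), ?_, Or.inr ⟨hpV, rfl⟩,
    Or.inl ⟨rfl, Set.left_mem_uIcc⟩, ?_⟩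
  · rintro ⟨y, u⟩ (⟨hy, hu⟩ | ⟨hy, hu⟩)
    · obtain rfl : y = x := hy
      have humem := hu
      rw [Set.uIcc, Set.mem_Icc] at humem
      obtain ⟨hu1, hu2⟩ := humem
      have huε : u < ε := lt_of_le_of_lt hu2 (by
        rcases le_total t t₀ with h | h
        · simpa [sup_eq_right.mpr h] using htε.trans_le (le_refl ε) |>.trans_le (le_refl ε) |> fun _ => ht₀lt
        · simpa [sup_eq_left.mpr h] using htε)
      refine ⟨⟨hxV, huε⟩, ?_⟩
      rw [hXs]
      rintro ⟨hxP, hu0⟩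
      have ht0 : t ≠ 0 := by
        rw [hXs] at hXsz
        exact fun h => hXsz ⟨hxP, h⟩
      have : 0 < t ⊓ t₀ := lt_inf_iff.mpr ⟨pos_iff_ne_zero.mpr ht0, ht₀pos⟩
      rw [hu0] at hu1
      exact this.ne' (le_antisymm hu1 zero_le')
    · obtain rfl : u = t₀ := hu
      refine ⟨⟨hy, ht₀lt⟩, ?_⟩
      rw [hXs]
      rintro ⟨-, h0⟩
      exact ht₀pos.ne' h0
  · apply IsPreconnected.union (x, t₀)
    · exact ⟨rfl, Set.right_mem_uIcc⟩
    · exact ⟨hxV, rfl⟩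
    · exact isPreconnected_singleton.prod isPreconnected_uIcc
    · exact hV.prod isPreconnected_singleton

/-- with X = (I × [0,∞)) ∖ (P × {0}), I moreover locally connected and
first-countable, γ(x,t) = (Φ(x), η(t)), and F a continuous proper real function on X
with F ∘ γ = F + 1, one has F(x,t) → +∞ as (x,t) → (p,0) within X, for every p ∈ P:
for every M there are a neighborhood U of p and ε > 0 with F > M on
(U × [0,ε)) ∩ X. Here [0,∞) is modelled by ℝ≥0. -/
theorem stmt13 {I : Type*} [TopologicalSpace I] [T2Space I]
    [LocallyConnectedSpace I] [FirstCountableTopology I]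
    (P : Set I) (hP : IsClosed P)
    (Φ : I ≃ₜ I) (hΦP : Φ '' P = P)
    (η : ℝ≥0 ≃ₜ ℝ≥0) (hη : ∀ t : ℝ≥0, 0 < t → η t < t)
    (Xs : Set (I × ℝ≥0)) (hXs : Xs = {z : I × ℝ≥0 | ¬(z.1 ∈ P ∧ z.2 = 0)})
    (F : I × ℝ≥0 → ℝ)
    (hFc : ContinuousOn F Xs)
    (hFprop : ∀ K : Set ℝ, IsCompact K → IsCompact (Xs ∩ F ⁻¹' K))
    (hFeq : ∀ z ∈ Xs, F (Φ z.1, η z.2) = F z + 1) :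
    ∀ p ∈ P, ∀ M : ℝ, ∃ U ∈ nhds p, ∃ ε : ℝ≥0, 0 < ε ∧
      ∀ x ∈ U, ∀ t : ℝ≥0, t < ε → (x, t) ∈ Xs → M < F (x, t) := by
  intro p hp M
  by_contra hcon
  push_neg at hcon
  -- basic facts about η and Φ
  have hΦmem : ∀ x ∈ P, Φ x ∈ P := fun x hx => hΦP ▸ Set.mem_image_of_mem Φ hx
  have hη0 := aux_eta_zero η hη
  have hηpos : ∀ {t : ℝ≥0}, 0 < t → 0 < η t := fun ht => aux_eta_pos η hη ht
  have hηle := aux_eta_le η hη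
  -- the point (y, s) with y ∈ P (or anything) and s > 0 lies in Xs
  have hmemXs : ∀ (y : I) (s : ℝ≥0), 0 < s → (y, s) ∈ Xs := by
    intro y s hs
    rw [hXs]
    rintro ⟨-, h0⟩
    exact hs.ne' h0
  -- iterate facts
  have key : ∀ (y : I), y ∈ P → ∀ (t : ℝ≥0), 0 < t → ∀ n : ℕ,
      (Φ : I → I)^[n] y ∈ P ∧ 0 < (η : ℝ≥0 → ℝ≥0)^[n] t ∧ (η : ℝ≥0 → ℝ≥0)^[n] t ≤ t ∧
      F ((Φ : I → I)^[n] y, (η : ℝ≥0 → ℝ≥0)^[n] t) = F (y, t) + n := by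
    intro y hy t ht n
    induction n with
    | zero => simpa using ⟨hy, ht⟩
    | succ n ih =>
      obtain ⟨h1, h2, h3, h4⟩ := ih
      rw [Function.iterate_succ_apply', Function.iterate_succ_apply']
      refine ⟨hΦmem _ h1, hηpos h2, (hηle _).trans h3, ?_⟩
      have := hFeq ((Φ : I → I)^[n] y, (η : ℝ≥0 → ℝ≥0)^[n] t) (hmemXs _ _ h2)
      rw [this, h4]
      push_cast
      ring
  -- the sequence (n+1)⁻¹ in ℝ≥0 tends to 0
  have hseq0 : Tendsto (fun n : ℕ => ((n : ℝ≥0) + 1)⁻¹) atTop (nhds 0) := by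
    rw [← NNReal.tendsto_coe]
    have : ∀ n : ℕ, ((((n : ℝ≥0) + 1)⁻¹ : ℝ≥0) : ℝ) = 1 / ((n : ℝ) + 1) := by
      intro n
      push_cast
      rw [one_div]
    simpa [this] using tendsto_one_div_add_atTop_nhds_zero_nat (𝕜 := ℝ)
  -- Lemma A: F (p, ·) is bounded below near 0
  have lemA : ∃ c : ℝ, ∃ δ : ℝ≥0, 0 < δ ∧ ∀ s : ℝ≥0, 0 < s → s < δ → c ≤ F (p, s) := by
    by_contra hA
    push_neg at hA
    have hA' : ∀ k : ℕ, ∃ s : ℝ≥0, (0 < s ∧ s < ((k : ℝ≥0) + 1)⁻¹) ∧ F (p, s) < -(k : ℝ) := by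
      intro k
      obtain ⟨s, hs1, hs2, hs3⟩ := hA (-(k : ℝ)) ((k : ℝ≥0) + 1)⁻¹ (by positivity)
      exact ⟨s, ⟨hs1, hs2⟩, hs3⟩
    choose s hs hsF using hA'
    set m : ℕ → ℕ := fun k => ⌈-F (p, s k)⌉₊ with hm
    set q : ℕ → I × ℝ≥0 := fun k => ((Φ : I → I)^[m k] p, (η : ℝ≥0 → ℝ≥0)^[m k] (s k)) with hq
    have hFneg : ∀ k, F (p, s k) < 0 := fun k =>
      lt_of_lt_of_le (hsF k) (neg_nonpos.mpr (by positivity))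
    have hqE : ∀ k, q k ∈ Xs ∩ F ⁻¹' (Set.Icc 0 1) := by
      intro k
      obtain ⟨h1, h2, h3, h4⟩ := key p hp (s k) (hs k).1 (m k)
      refine ⟨hmemXs _ _ h2, ?_⟩
      rw [Set.mem_preimage, Set.mem_Icc, hq]
      constructor
      · rw [h4]
        have := Nat.le_ceil (-F (p, s k))
        rw [hm]
        linarith
      · rw [h4]
        have := Nat.ceil_lt_add_one (le_of_lt (neg_pos.mpr (hFneg k)))
        rw [hm]
        linarith
    have hE : IsCompact (Xs ∩ F ⁻¹' (Set.Icc 0 1)) := hFprop _ isCompact_Icc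
    obtain ⟨a, haE, φ, hφ, hconv⟩ := hE.tendsto_subseq hqE
    -- second coordinates tend to a.2 and to 0
    have hsnd : Tendsto (fun k => (q (φ k)).2) atTop (nhds a.2) :=
      ((continuous_snd.tendsto a).comp hconv)
    have hsnd0 : Tendsto (fun k => (q (φ k)).2) atTop (nhds 0) := by
      apply tendsto_of_tendsto_of_tendsto_of_le_of_le tendsto_const_nhds hseq0
        (fun k => zero_le')
      intro k
      have h3 := (key p hp (s (φ k)) (hs (φ k)).1 (m (φ k))).2.2.1
      refine le_trans h3 (le_trans (hs (φ k)).2.le ?_)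
      apply inv_anti₀ (by positivity)
      have : (k : ℝ≥0) ≤ (φ k : ℝ≥0) := by exact_mod_cast hφ.le_apply
      exact add_le_add_left this 1
    have ha2 : a.2 = 0 := tendsto_nhds_unique hsnd hsnd0
    have ha1 : a.1 ∈ P := by
      apply hP.mem_of_tendsto ((continuous_fst.tendsto a).comp hconv)
      exact Eventually.of_forall fun k => (key p hp (s (φ k)) (hs (φ k)).1 (m (φ k))).1
    have := haE.1
    rw [hXs] at this
    exact this ⟨ha1, ha2⟩
  obtain ⟨c, δ, hδ, hc⟩ := lemA
  -- antitone neighborhood basis and connected neighborhoods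
  obtain ⟨B, hB⟩ := (nhds p).exists_antitone_basis
  have hBmem : ∀ n, B n ∈ nhds p := fun n => hB.toHasBasis.mem_of_mem trivial
  have hVex : ∀ n : ℕ, ∃ V ⊆ B n, IsOpen V ∧ p ∈ V ∧ IsConnected V := fun n =>
    locallyConnectedSpace_iff_subsets_isOpen_isConnected.mp ‹_› p (B n) (hBmem n)
  choose V hVB hVopen hVp hVconn using hVex
  set ε : ℕ → ℝ≥0 := fun n => ((n : ℝ≥0) + 1)⁻¹ with hε
  have hεpos : ∀ n, 0 < ε n := fun n => by rw [hε]; positivity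
  set L : ℝ := min c M with hL
  set R : ℝ := max c M with hR
  -- for each n, find a point w in (V n × [0, ε n)) ∩ Xs with F w ∈ [L, R]
  have hwex : ∀ n : ℕ, ∃ w : I × ℝ≥0, w ∈ Xs ∧ w.1 ∈ B n ∧ w.2 ≤ ε n ∧
      F w ∈ Set.Icc L R := by
    intro n
    set W : Set (I × ℝ≥0) := (V n ×ˢ Set.Iio (ε n)) ∩ Xs with hW
    have hWconn : IsPreconnected W :=
      aux_conn P Xs hXs (V n) (hVconn n).isPreconnected p (hVp n) (ε n) (hεpos n)
    have hWXs : W ⊆ Xs := Set.inter_subset_right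
    have hWimg : IsPreconnected (F '' W) := hWconn.image F (hFc.mono hWXs)
    have hWord : (F '' W).OrdConnected := hWimg.ordConnected
    -- the bad point z with F z ≤ M
    obtain ⟨x, hxV, t, htε, hzXs, hzF⟩ :=
      hcon (V n) ((hVopen n).mem_nhds (hVp n)) (ε n) (hεpos n)
    have hzW : (x, t) ∈ W := ⟨⟨hxV, htε⟩, hzXs⟩
    -- the good point (p, s) with F ≥ c
    set s : ℝ≥0 := min δ (ε n) / 2 with hs
    have hspos : 0 < s := by
      rw [hs]
      have : 0 < min δ (ε n) := lt_min hδ (hεpos n)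
      positivity
    have hsδ : s < δ := lt_of_lt_of_le (NNReal.half_lt_self (lt_min hδ (hεpos n)).ne') (min_le_left _ _)
    have hsε : s < ε n := lt_of_lt_of_le (NNReal.half_lt_self (lt_min hδ (hεpos n)).ne') (min_le_right _ _)
    have hpsW : (p, s) ∈ W := ⟨⟨hVp n, hsε⟩, hmemXs p s hspos⟩
    have hbc : c ≤ F (p, s) := hc s hspos hsδ
    -- intermediate value
    set a : ℝ := F (x, t) with ha
    set b : ℝ := F (p, s) with hb
    set v : ℝ := max L (min a b) with hv
    have hvmem : v ∈ Set.uIcc a b := by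
      rw [Set.uIcc, Set.mem_Icc]
      constructor
      · exact le_max_right _ _
      · apply max_le
        · exact le_trans (min_le_left c M) (le_trans hbc (le_max_right a b))
        · exact le_trans inf_le_sup (le_refl _)
      
    have hvI : v ∈ Set.Icc L R := by
      constructor
      · exact le_max_left _ _
      · apply max_le
        · exact le_trans (min_le_right c M) (le_max_right c M)
        · exact le_trans (min_le_left a b) (le_trans hzF (le_max_right c M))
    have : v ∈ F '' W :=
      hWord.uIcc_subset ⟨(x, t), hzW, rfl⟩ ⟨(p, s), hpsW, rfl⟩ hvmem
    obtain ⟨w, hwW, hwF⟩ := this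
    exact ⟨w, hwW.2, hVB n hwW.1.1, (hwW.1.2).le, hwF ▸ hvI⟩
  choose w hwXs hwB hwε hwF using hwex
  -- w n tends to (p, 0)
  have hw1 : Tendsto (fun n => (w n).1) atTop (nhds p) := hB.tendsto hwB
  have hw2 : Tendsto (fun n => (w n).2) atTop (nhds 0) :=
    tendsto_of_tendsto_of_tendsto_of_le_of_le tendsto_const_nhds hseq0
      (fun n => zero_le') hwε
  have hwt : Tendsto w atTop (nhds (p, 0)) := by
    rw [nhds_prod_eq]
    exact Tendsto.prodMk hw1 hw2
  -- properness contradiction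
  have hE : IsCompact (Xs ∩ F ⁻¹' (Set.Icc L R)) := hFprop _ isCompact_Icc
  have hEc : IsClosed (Xs ∩ F ⁻¹' (Set.Icc L R)) := hE.isClosed
  have hmem : (p, (0 : ℝ≥0)) ∈ Xs ∩ F ⁻¹' (Set.Icc L R) :=
    hEc.mem_of_tendsto hwt (Eventually.of_forall fun n => ⟨hwXs n, hwF n⟩)
  have := hmem.1
  rw [hXs] at this
  exact this ⟨hp, rfl⟩
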